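/- Let W be a standard Brownian motion on [0,1], b ∈ (1, 2^{1/4}), and c_π := 2^{10}/π². Let O := ∑_{n=0}^∞ 1{∃ s ∈ [0,1] : sup_{t ∈ [s-2^{-n}, s+2^{-n}] ∩ [0,1]} |W(s)-W(t)|/2^{-n} ≤ b^n}. Then for all k ≥ 1, P(O ≥ k) ≤ 2·e^{9/8}·[k·(2c_π/b⁴ + 1) + 1]·(b⁴/2)^k. -/

import Mathlib

open MeasureTheory ProbabilityTheory Set Real
open scoped ENNReal NNReal

/-- A standard (scalar) Brownian motion on a probability space. -/
structure IsBrownianMotion {Ω : Type*} [MeasurableSpace Ω] (P : Measure Ω)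
    (W : ℝ → Ω → ℝ) : Prop where
  meas : ∀ t, Measurable (W t)
  init : ∀ᵐ ω ∂P, W 0 ω = 0
  cont : ∀ᵐ ω ∂P, Continuous fun t => W t ω
  incr_law : ∀ s t : ℝ, s ≤ t →
    Measure.map (fun ω => W t ω - W s ω) P = gaussianReal 0 (Real.toNNReal (t - s))
  indep_incr : ∀ (n : ℕ) (t : ℕ → ℝ), Monotone t →
    iIndepFun
      (fun (i : Fin n) ω => W (t (i + 1)) ω - W (t i) ω) P

lemma gauss_small_ball (v : ℝ≥0) (hv : v ≠ 0) (ε : ℝ) (hε : 0 ≤ ε) :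
    gaussianReal 0 v (Set.Icc (-ε) ε) ≤ ENNReal.ofReal (2 * ε / Real.sqrt (2 * π * v)) := by
  rw [gaussianReal_apply 0 hv]
  have hb : ∀ x : ℝ, gaussianPDF 0 v x ≤ ENNReal.ofReal ((Real.sqrt (2 * π * v))⁻¹) := by
    intro x
    rw [gaussianPDF]
    apply ENNReal.ofReal_le_ofReal
    rw [gaussianPDFReal]
    calc (Real.sqrt (2 * π * v))⁻¹ * Real.exp (-(x - 0)^2 / (2 * v))
        ≤ (Real.sqrt (2 * π * v))⁻¹ * 1 := by
          apply mul_le_mul_of_nonneg_left _ (by positivity)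
          rw [Real.exp_le_one_iff]
          have hv' : (0:ℝ) < (v:ℝ) := by
            have := hv
            positivity
          rw [neg_div]
          simp only [Left.neg_nonpos_iff]
          positivity
      _ = _ := mul_one _
  calc ∫⁻ x in Set.Icc (-ε) ε, gaussianPDF 0 v x
      ≤ ∫⁻ _x in Set.Icc (-ε) ε, ENNReal.ofReal ((Real.sqrt (2 * π * v))⁻¹) :=
        lintegral_mono fun x => hb x
    _ = ENNReal.ofReal ((Real.sqrt (2 * π * v))⁻¹) * volume (Set.Icc (-ε) ε) := by
        rw [setLIntegral_const]
    _ ≤ ENNReal.ofReal (2 * ε / Real.sqrt (2 * π * v)) := by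
        rw [Real.volume_Icc, ← ENNReal.ofReal_mul (by positivity)]
        apply ENNReal.ofReal_le_ofReal
        have h1 : ε - -ε ≤ 2 * ε := by linarith
        rw [div_eq_mul_inv, mul_comm]
        exact mul_le_mul_of_nonneg_right h1 (by positivity)

lemma incr_small_ball {Ω : Type*} [MeasurableSpace Ω] (P : Measure Ω)
    (W : ℝ → Ω → ℝ) (hW : IsBrownianMotion P W) {s t : ℝ} (hst : s < t) {ε : ℝ} (hε : 0 ≤ ε) :
    P ((fun ω => W t ω - W s ω) ⁻¹' Set.Icc (-ε) ε)
      ≤ ENNReal.ofReal (2 * ε / Real.sqrt (2 * π * (t - s))) := by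
  have hmeas : Measurable (fun ω => W t ω - W s ω) := (hW.meas t).sub (hW.meas s)
  rw [← Measure.map_apply hmeas measurableSet_Icc, hW.incr_law s t hst.le]
  have hv : Real.toNNReal (t - s) ≠ 0 := by
    simp only [ne_eq, Real.toNNReal_eq_zero, not_le]
    linarith
  have h := gauss_small_ball _ hv ε hε
  rwa [Real.coe_toNNReal _ (by linarith)] at h

lemma four_incr {Ω : Type*} [MeasurableSpace Ω] (P : Measure Ω)
    (W : ℝ → Ω → ℝ) (hW : IsBrownianMotion P W) (b : ℝ) (hb1 : 0 < b) (n j : ℕ) :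
    P (⋂ i : Fin 4,
        (fun ω => W (((4 * j + ((i:ℕ) + 1) : ℕ) : ℝ) * ((2:ℝ)^(-(n:ℤ)) / 4)) ω
          - W (((4 * j + (i:ℕ) : ℕ) : ℝ) * ((2:ℝ)^(-(n:ℤ)) / 4)) ω) ⁻¹'
        Set.Icc (-(2 * b^n * (2:ℝ)^(-(n:ℤ)))) (2 * b^n * (2:ℝ)^(-(n:ℤ))))
      ≤ ENNReal.ofReal ((2^10 / π^2) * (b^4 / 4)^n) := by
  set x : ℝ := (2:ℝ)^(-(n:ℤ)) with hxdef
  have hx : 0 < x := by positivity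
  set m : ℝ := x / 4 with hmdef
  have hm : 0 < m := by positivity
  set tt : ℕ → ℝ := fun i => ((4 * j + i : ℕ) : ℝ) * m with httdef
  have htt : Monotone tt := by
    intro a c hac
    have : ((4 * j + a : ℕ) : ℝ) ≤ ((4 * j + c : ℕ) : ℝ) := by
      exact_mod_cast Nat.add_le_add_left hac _
    exact mul_le_mul_of_nonneg_right this hm.le
  set ε : ℝ := 2 * b^n * x with hedef
  have hε : 0 ≤ ε := by positivity
  have hind := hW.indep_incr 4 tt htt
  have hprod := hind.meas_iInter (s := fun i : Fin 4 =>
      (fun ω => W (tt ((i:ℕ) + 1)) ω - W (tt (i:ℕ)) ω) ⁻¹' Set.Icc (-ε) ε)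
    (fun i => ⟨Set.Icc (-ε) ε, measurableSet_Icc, rfl⟩)
  have hstep : ∀ i : Fin 4, P ((fun ω => W (tt ((i:ℕ) + 1)) ω - W (tt (i:ℕ)) ω) ⁻¹' Set.Icc (-ε) ε)
      ≤ ENNReal.ofReal (2 * ε / Real.sqrt (2 * π * m)) := by
    intro i
    have hlt : tt (i:ℕ) < tt ((i:ℕ) + 1) := by
      simp only [httdef]
      have : ((4 * j + (i:ℕ) : ℕ) : ℝ) < ((4 * j + ((i:ℕ) + 1) : ℕ) : ℝ) := by
        exact_mod_cast Nat.lt_succ_self _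
      exact mul_lt_mul_of_pos_right this hm
    have h := incr_small_ball P W hW hlt hε
    have hdiff : tt ((i:ℕ) + 1) - tt (i:ℕ) = m := by
      simp only [httdef]
      push_cast
      ring
    rwa [hdiff] at h
  calc P (⋂ i : Fin 4, _) = ∏ i : Fin 4, P ((fun ω => W (tt ((i:ℕ) + 1)) ω - W (tt (i:ℕ)) ω) ⁻¹' Set.Icc (-ε) ε) := hprod
    _ ≤ ∏ _i : Fin 4, ENNReal.ofReal (2 * ε / Real.sqrt (2 * π * m)) :=
        Finset.prod_le_prod' fun i _ => hstep i
    _ = ENNReal.ofReal (2 * ε / Real.sqrt (2 * π * m)) ^ 4 := by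
        rw [Finset.prod_const]; simp
    _ = ENNReal.ofReal ((2 * ε / Real.sqrt (2 * π * m)) ^ 4) := by
        rw [ENNReal.ofReal_pow (by positivity)]
    _ = ENNReal.ofReal ((2^10 / π^2) * (b^4 / 4)^n) := by
        congr 1
        have hD : (0:ℝ) ≤ 2 * π * m := by positivity
        have hs4 : (Real.sqrt (2 * π * m)) ^ 4 = (2 * π * m) ^ 2 := by
          rw [show (4:ℕ) = 2 * 2 from rfl, pow_mul, Real.sq_sqrt hD]
        have hx1 : x * (2:ℝ)^n = 1 := by
          rw [hxdef, ← zpow_natCast (2:ℝ) n, ← zpow_add₀ (two_ne_zero (α := ℝ))]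
          norm_num
        have hx2 : x ^ 2 * (4:ℝ)^n = 1 := by
          rw [show (4:ℝ) = 2^2 by norm_num, ← pow_mul, mul_comm 2 n, pow_mul, ← mul_pow, hx1,
            one_pow]
        have hbn : (b^4 / 4 : ℝ)^n = (b^n)^4 * x^2 := by
          rw [div_pow, ← pow_mul, ← pow_mul, mul_comm n 4,
            div_eq_iff (by positivity : ((4:ℝ)^n) ≠ 0), mul_assoc, hx2, mul_one]
        rw [div_pow, hs4, hedef, hmdef, hbn]
        have hπ : (π:ℝ) ≠ 0 := Real.pi_ne_zero
        field_simp
        ring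

lemma cover {Ω : Type*} (W : ℝ → Ω → ℝ) (b : ℝ) (hb0 : 0 < b) (n : ℕ) :
    {ω' | ∃ s ∈ Set.Icc (0:ℝ) 1,
        ∀ u ∈ Set.Icc (s - (2:ℝ)^(-(n:ℤ))) (s + (2:ℝ)^(-(n:ℤ))) ∩ Set.Icc (0:ℝ) 1,
          |W s ω' - W u ω'| / (2:ℝ)^(-(n:ℤ)) ≤ b^n}
      ⊆ ⋃ j ∈ Finset.range (2^n), ⋂ i : Fin 4,
        (fun ω => W (((4*j + ((i:ℕ)+1) : ℕ) : ℝ) * ((2:ℝ)^(-(n:ℤ))/4)) ω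
          - W (((4*j + (i:ℕ) : ℕ) : ℝ) * ((2:ℝ)^(-(n:ℤ))/4)) ω) ⁻¹'
        Set.Icc (-(2*b^n*(2:ℝ)^(-(n:ℤ)))) (2*b^n*(2:ℝ)^(-(n:ℤ))) := by
  intro ω hω
  obtain ⟨s, hs, h⟩ := hω
  set x : ℝ := (2:ℝ)^(-(n:ℤ)) with hxdef
  have hx : 0 < x := by positivity
  have hx1 : x * (2:ℝ)^n = 1 := by
    rw [hxdef, ← zpow_natCast (2:ℝ) n, ← zpow_add₀ (two_ne_zero (α := ℝ))]
    norm_num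
  set j : ℕ := min ⌊s * 2^n⌋₊ (2^n - 1) with hjdef
  have h2n : 1 ≤ 2^n := Nat.one_le_two_pow
  have hjlt : j < 2^n := lt_of_le_of_lt (min_le_right _ _) (by omega)
  have hj1 : (j:ℝ) + 1 ≤ (2:ℝ)^n := by
    have : j + 1 ≤ 2^n := hjlt
    exact_mod_cast this
  have hs0 : 0 ≤ s := hs.1
  have hjs : (j:ℝ) * x ≤ s := by
    have h1 : (j:ℝ) ≤ s * 2^n := by
      calc (j:ℝ) ≤ (⌊s * 2^n⌋₊ : ℝ) := Nat.cast_le.2 (min_le_left _ _)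
        _ ≤ s * 2^n := Nat.floor_le (by positivity)
    calc (j:ℝ) * x ≤ (s * 2^n) * x := mul_le_mul_of_nonneg_right h1 hx.le
      _ = s * (x * 2^n) := by ring
      _ = s := by rw [hx1, mul_one]
  have hsj : s ≤ ((j:ℝ) + 1) * x := by
    rcases le_or_gt ⌊s * 2^n⌋₊ (2^n - 1) with hc | hc
    · have hjf : j = ⌊s * 2^n⌋₊ := min_eq_left hc
      have h2 : s * 2^n < (j:ℝ) + 1 := by
        rw [hjf]
        exact_mod_cast Nat.lt_floor_add_one (s * 2^n)
      calc s = s * 2^n * x := by rw [mul_assoc, mul_comm ((2:ℝ)^n) x, hx1, mul_one]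
        _ ≤ ((j:ℝ) + 1) * x := mul_le_mul_of_nonneg_right h2.le hx.le
    · have hjf : j = 2^n - 1 := min_eq_right (by omega)
      have : ((j:ℝ) + 1) = (2:ℝ)^n := by
        rw [hjf]
        push_cast [Nat.cast_sub h2n]
        ring
      rw [this]
      calc s ≤ 1 := hs.2
        _ = x * 2^n := hx1.symm
        _ = (2:ℝ)^n * x := by ring
  have key : ∀ i : ℕ, i ≤ 4 → (((4*j + i : ℕ) : ℝ) * (x/4)) ∈
      Set.Icc (s - x) (s + x) ∩ Set.Icc (0:ℝ) 1 := by
    intro i hi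
    have hlo : (j:ℝ) * x ≤ ((4*j + i : ℕ) : ℝ) * (x/4) := by
      have : (4 * (j:ℝ)) ≤ ((4*j + i : ℕ) : ℝ) := by push_cast; linarith
      calc (j:ℝ) * x = (4 * (j:ℝ)) * (x/4) := by ring
        _ ≤ _ := mul_le_mul_of_nonneg_right this (by positivity)
    have hhi : ((4*j + i : ℕ) : ℝ) * (x/4) ≤ ((j:ℝ) + 1) * x := by
      have : ((4*j + i : ℕ) : ℝ) ≤ 4 * (j:ℝ) + 4 := by
        push_cast
        have : (i:ℝ) ≤ 4 := by exact_mod_cast hi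
        linarith
      calc ((4*j + i : ℕ) : ℝ) * (x/4) ≤ (4 * (j:ℝ) + 4) * (x/4) :=
            mul_le_mul_of_nonneg_right this (by positivity)
        _ = ((j:ℝ) + 1) * x := by ring
    constructor
    · constructor
      · have : s - x ≤ (j:ℝ) * x := by nlinarith
        linarith
      · have : ((j:ℝ) + 1) * x ≤ s + x := by nlinarith
        linarith
    · constructor
      · positivity
      · have h3 : ((j:ℝ) + 1) * x ≤ (2:ℝ)^n * x := mul_le_mul_of_nonneg_right hj1 hx.le
        have h2 : (2:ℝ)^n * x = 1 := by rw [mul_comm]; exact hx1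
        linarith
  have key2 : ∀ i : ℕ, i ≤ 4 → |W s ω - W (((4*j + i : ℕ) : ℝ) * (x/4)) ω| ≤ b^n * x := by
    intro i hi
    have := h _ (key i hi)
    rw [div_le_iff₀ hx] at this
    linarith [this]
  apply Set.mem_biUnion (Finset.mem_range.2 hjlt)
  apply Set.mem_iInter.2
  intro i
  have hi4 : (i:ℕ) ≤ 4 := by omega
  have hi41 : (i:ℕ) + 1 ≤ 4 := by omega
  simp only [Set.mem_preimage, Set.mem_Icc, ← abs_le]
  have h1 := key2 ((i:ℕ) + 1) hi41
  have h2 := key2 (i:ℕ) hi4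
  calc |W (((4*j + ((i:ℕ)+1) : ℕ) : ℝ) * (x/4)) ω - W (((4*j + (i:ℕ) : ℕ) : ℝ) * (x/4)) ω|
      ≤ |W (((4*j + ((i:ℕ)+1) : ℕ) : ℝ) * (x/4)) ω - W s ω|
        + |W s ω - W (((4*j + (i:ℕ) : ℕ) : ℝ) * (x/4)) ω| := abs_sub_le _ _ _
    _ ≤ 2 * b^n * x := by
        rw [abs_sub_comm]
        linarith

lemma count_sub {Ω : Type*} (E : ℕ → Set Ω) (k : ℕ) (hk : 1 ≤ k) :
    {ω | (k:ℝ≥0∞) ≤ ∑' n : ℕ, (E n).indicator (fun _ => (1:ℝ≥0∞)) ω}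
      ⊆ ⋃ n : ℕ, E (n + (k-1)) := by
  intro ω hω
  simp only [Set.mem_setOf_eq] at hω
  by_contra hc
  simp only [Set.mem_iUnion, not_exists] at hc
  have hzero : ∀ n ∉ Finset.range (k-1), (E n).indicator (fun _ => (1:ℝ≥0∞)) ω = 0 := by
    intro n hn
    rw [Finset.mem_range, not_lt] at hn
    have h2 := hc (n - (k-1))
    rw [Nat.sub_add_cancel hn] at h2
    exact Set.indicator_of_notMem h2 _
  rw [tsum_eq_sum hzero] at hω
  have hle : ∑ n ∈ Finset.range (k-1), (E n).indicator (fun _ => (1:ℝ≥0∞)) ω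
      ≤ ∑ _n ∈ Finset.range (k-1), 1 := by
    refine Finset.sum_le_sum fun n _ => ?_
    classical
    rw [Set.indicator]
    split <;> simp
  rw [Finset.sum_const, Finset.card_range, nsmul_eq_mul, mul_one] at hle
  have h3 : (k:ℝ≥0∞) ≤ ((k-1 : ℕ) : ℝ≥0∞) := hω.trans hle
  rw [Nat.cast_le] at h3
  omega

lemma final_real_1 (c q : ℝ) (k : ℕ) (hk : 1 ≤ k) (hc0 : 0 < c) (hq0 : 0 < q) (hq1 : q < 1)
    (hcase : q ≤ 1 - 1/(k:ℝ)) :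
    c * q^(k-1) * (1-q)⁻¹ ≤ 2 * Real.exp (9/8) * ((k:ℝ) * (c/q + 1) + 1) * q^k := by
  have hkR : (1:ℝ) ≤ (k:ℝ) := by exact_mod_cast hk
  have hqk : (0:ℝ) < q^k := by positivity
  have hqk1 : q^k = q^(k-1) * q := by
    conv_lhs => rw [show k = (k-1)+1 by omega]
    rw [pow_succ]
  have h1q : (0:ℝ) < 1 - q := by
    have : (0:ℝ) < 1/(k:ℝ) := by positivity
    linarith
  have hinv : (1-q)⁻¹ ≤ (k:ℝ) := by
    have h0 : 1/(k:ℝ) ≤ 1 - q := by linarith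
    have h2 : (1-q)⁻¹ ≤ (1/(k:ℝ))⁻¹ := inv_anti₀ (by positivity) h0
    rwa [one_div, inv_inv] at h2
  have step1 : c * q^(k-1) * (1-q)⁻¹ ≤ c * q^(k-1) * k :=
    mul_le_mul_of_nonneg_left hinv (by positivity)
  have step2 : c * q^(k-1) * k = ((k:ℝ) * (c/q)) * q^k := by
    rw [hqk1]
    field_simp
  have he1 : (1:ℝ) ≤ Real.exp (9/8) := Real.one_le_exp (by norm_num)
  have hcq0 : (0:ℝ) < c/q := by positivity
  have step3 : ((k:ℝ) * (c/q)) * q^k ≤ 2 * Real.exp (9/8) * ((k:ℝ) * (c/q + 1) + 1) * q^k := by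
    apply mul_le_mul_of_nonneg_right _ hqk.le
    have hX0 : (0:ℝ) < (k:ℝ) * (c/q + 1) + 1 := by positivity
    calc (k:ℝ) * (c/q) ≤ (k:ℝ) * (c/q + 1) + 1 := by nlinarith
      _ ≤ (2 * Real.exp (9/8)) * ((k:ℝ) * (c/q + 1) + 1) :=
          le_mul_of_one_le_left hX0.le (by linarith)
      _ = 2 * Real.exp (9/8) * ((k:ℝ) * (c/q + 1) + 1) := by ring
  linarith [step1, step2.le, step2.ge, step3]

lemma final_real_2 (c q : ℝ) (k : ℕ) (hk : 1 ≤ k) (hc64 : 64 ≤ c) (hq0 : 0 < q)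
    (hcase : 1 - 1/(k:ℝ) < q) :
    1 ≤ 2 * Real.exp (9/8) * ((k:ℝ) * (c/q + 1) + 1) * q^k := by
  have hkR : (1:ℝ) ≤ (k:ℝ) := by exact_mod_cast hk
  have hqk : (0:ℝ) < q^k := by positivity
  have hc0 : (0:ℝ) < c := by linarith
  have hqk1 : q^k = q^(k-1) * q := by
    conv_lhs => rw [show k = (k-1)+1 by omega]
    rw [pow_succ]
  have hek : Real.exp (-1) ≤ q^(k-1) := by
    rcases Nat.eq_or_lt_of_le hk with hk1' | hk2
    · rw [← hk1']
      simp only [Nat.sub_self, pow_zero]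
      calc Real.exp (-1) ≤ Real.exp 0 := Real.exp_le_exp.2 (by norm_num)
        _ = 1 := Real.exp_zero
    · have hk2' : 2 ≤ k := hk2
      have hj : 1 ≤ k - 1 := by omega
      set j : ℝ := ((k-1 : ℕ) : ℝ) with hjdef
      have hjR : (1:ℝ) ≤ j := by rw [hjdef]; exact_mod_cast hj
      have hjpos : (0:ℝ) < j := by linarith
      have hkk : j + 1 = (k:ℝ) := by
        rw [hjdef]
        push_cast [Nat.cast_sub hk]
        ring
      have hexp : Real.exp (-(1/j)) ≤ 1 - 1/(k:ℝ) := by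
        have h6 : 1/j + 1 ≤ Real.exp (1/j) := by
          have := Real.add_one_le_exp (1/j)
          linarith
        rw [Real.exp_neg]
        have h7 : (0:ℝ) < 1/j + 1 := by positivity
        have h8 : (Real.exp (1/j))⁻¹ ≤ (1/j + 1)⁻¹ := inv_anti₀ h7 h6
        refine h8.trans ?_
        have h10 : (1/j + 1) = (j+1)/j := by field_simp; ring
        have h11 : 1 - 1/(k:ℝ) = j/(j+1) := by
          rw [← hkk]
          field_simp
          ring
        rw [h10, h11, inv_div]
      have h9 : (0:ℝ) ≤ 1 - 1/(k:ℝ) := by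
        have hkick : (2:ℝ) ≤ (k:ℝ) := by exact_mod_cast hk2'
        have : 1/(k:ℝ) ≤ 1/2 := by
          apply div_le_div_of_nonneg_left (by norm_num) (by norm_num) hkick
        linarith
      calc Real.exp (-1) = Real.exp (-(1/j)) ^ (k-1) := by
            rw [← Real.exp_nat_mul, ← hjdef,
              show j * (-(1/j)) = -1 by field_simp]
        _ ≤ (1 - 1/(k:ℝ)) ^ (k-1) := pow_le_pow_left₀ (Real.exp_pos _).le hexp _
        _ ≤ q ^ (k-1) := pow_le_pow_left₀ h9 hcase.le _
  have t3 : 2 * Real.exp (9/8) * ((k:ℝ) * (c/q)) * q^k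
      = 2 * (Real.exp (9/8) * q^(k-1)) * ((k:ℝ) * c) := by
    rw [hqk1]
    field_simp
  have t4 : Real.exp (9/8) * Real.exp (-1) ≤ Real.exp (9/8) * q^(k-1) :=
    mul_le_mul_of_nonneg_left hek (Real.exp_pos _).le
  have hE : Real.exp (9/8) * Real.exp (-1) = Real.exp (1/8) := by
    rw [← Real.exp_add]
    norm_num
  have hE1 : (1:ℝ) ≤ Real.exp (1/8) := Real.one_le_exp (by norm_num)
  have t5 : (1:ℝ) ≤ 2 * (Real.exp (9/8) * q^(k-1)) * ((k:ℝ) * c) := by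
    rw [hE] at t4
    have hkc : (64:ℝ) ≤ (k:ℝ) * c := by nlinarith
    nlinarith
  have t6 : 2 * Real.exp (9/8) * ((k:ℝ) * (c/q)) * q^k
      ≤ 2 * Real.exp (9/8) * ((k:ℝ) * (c/q + 1) + 1) * q^k := by
    apply mul_le_mul_of_nonneg_right _ hqk.le
    have hcq0 : (0:ℝ) < c/q := by positivity
    have h5 : (k:ℝ) * (c/q) ≤ (k:ℝ) * (c/q + 1) + 1 := by nlinarith
    exact mul_le_mul_of_nonneg_left h5 (by positivity)
  linarith [t3.le, t3.ge]

theorem stmt19 {Ω : Type*} [MeasurableSpace Ω] (P : Measure Ω) [IsProbabilityMeasure P]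
    (W : ℝ → Ω → ℝ) (hW : IsBrownianMotion P W)
    (b : ℝ) (hb : b ∈ Set.Ioo (1 : ℝ) ((2 : ℝ) ^ ((1 : ℝ) / 4)))
    (k : ℕ) (hk : 1 ≤ k) :
    P {ω | (k : ℝ≥0∞) ≤ ∑' n : ℕ, Set.indicator
        {ω' | ∃ s ∈ Set.Icc (0 : ℝ) 1,
          ∀ u ∈ Set.Icc (s - (2 : ℝ) ^ (-(n : ℤ))) (s + (2 : ℝ) ^ (-(n : ℤ))) ∩
              Set.Icc (0 : ℝ) 1,
            |W s ω' - W u ω'| / (2 : ℝ) ^ (-(n : ℤ)) ≤ b ^ n}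
        (fun _ => (1 : ℝ≥0∞)) ω}
      ≤ ENNReal.ofReal (2 * Real.exp (9 / 8) *
          ((k : ℝ) * (2 * (2 ^ 10 / π ^ 2) / b ^ 4 + 1) + 1) * (b ^ 4 / 2) ^ k) := by
  obtain ⟨hb1, hb2⟩ := hb
  have hb0 : (0:ℝ) < b := lt_trans one_pos hb1
  set c : ℝ := 2^10 / π^2 with hcdef
  have hc0 : 0 < c := by positivity
  set q : ℝ := b^4 / 2 with hqdef
  have hq0 : 0 < q := by positivity
  have hb42 : b^4 < 2 := by
    have h4 : b^4 < ((2:ℝ)^((1:ℝ)/4))^4 := by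
      exact pow_lt_pow_left₀ hb2 hb0.le (by norm_num)
    calc b^4 < ((2:ℝ)^((1:ℝ)/4))^4 := h4
      _ = 2 := by
        rw [← Real.rpow_natCast ((2:ℝ)^((1:ℝ)/4)) 4, ← Real.rpow_mul (by norm_num)]
        norm_num
  have hq1 : q < 1 := by rw [hqdef]; linarith
  set E : ℕ → Set Ω := fun n => {ω' | ∃ s ∈ Set.Icc (0 : ℝ) 1,
      ∀ u ∈ Set.Icc (s - (2 : ℝ) ^ (-(n : ℤ))) (s + (2 : ℝ) ^ (-(n : ℤ))) ∩
          Set.Icc (0 : ℝ) 1,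
        |W s ω' - W u ω'| / (2 : ℝ) ^ (-(n : ℤ)) ≤ b ^ n} with hEdef
  have hEbound : ∀ n : ℕ, P (E n) ≤ ENNReal.ofReal (c * q^n) := by
    intro n
    calc P (E n) ≤ P (⋃ j ∈ Finset.range (2^n), ⋂ i : Fin 4,
          (fun ω => W (((4*j + ((i:ℕ)+1) : ℕ) : ℝ) * ((2:ℝ)^(-(n:ℤ))/4)) ω
            - W (((4*j + (i:ℕ) : ℕ) : ℝ) * ((2:ℝ)^(-(n:ℤ))/4)) ω) ⁻¹'
          Set.Icc (-(2*b^n*(2:ℝ)^(-(n:ℤ)))) (2*b^n*(2:ℝ)^(-(n:ℤ)))) :=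
        measure_mono (cover W b hb0 n)
      _ ≤ ∑ j ∈ Finset.range (2^n), P (⋂ i : Fin 4,
          (fun ω => W (((4*j + ((i:ℕ)+1) : ℕ) : ℝ) * ((2:ℝ)^(-(n:ℤ))/4)) ω
            - W (((4*j + (i:ℕ) : ℕ) : ℝ) * ((2:ℝ)^(-(n:ℤ))/4)) ω) ⁻¹'
          Set.Icc (-(2*b^n*(2:ℝ)^(-(n:ℤ)))) (2*b^n*(2:ℝ)^(-(n:ℤ)))) :=
        measure_biUnion_finset_le _ _
      _ ≤ ∑ _j ∈ Finset.range (2^n), ENNReal.ofReal (c * (b^4/4)^n) := by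
          refine Finset.sum_le_sum fun j _ => ?_
          exact four_incr P W hW b hb0 n j
      _ = ((2^n : ℕ) : ℝ≥0∞) * ENNReal.ofReal (c * (b^4/4)^n) := by
          rw [Finset.sum_const, Finset.card_range, nsmul_eq_mul]
      _ = ENNReal.ofReal (c * q^n) := by
          rw [← ENNReal.ofReal_natCast (2^n), ← ENNReal.ofReal_mul (by positivity)]
          congr 1
          have h2 : ((2^n : ℕ) : ℝ) = (2:ℝ)^n := by push_cast; ring
          rw [h2, hqdef]
          have h3 : (b^4/2 : ℝ)^n = (2:ℝ)^n * (b^4/4)^n := by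
            rw [← mul_pow]
            congr 1
            ring
          rw [h3]
          ring
  have hcq : 2 * c / b^4 = c / q := by
    rw [hqdef]
    field_simp
  rw [hcq]
  have hPg : P {ω | (k : ℝ≥0∞) ≤ ∑' n : ℕ, (E n).indicator (fun _ => (1 : ℝ≥0∞)) ω}
      ≤ ENNReal.ofReal (c * q^(k-1) * (1-q)⁻¹) := by
    calc P {ω | (k : ℝ≥0∞) ≤ ∑' n : ℕ, (E n).indicator (fun _ => (1 : ℝ≥0∞)) ω}
        ≤ P (⋃ n : ℕ, E (n + (k-1))) := measure_mono (count_sub E k hk)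
      _ ≤ ∑' n : ℕ, P (E (n + (k-1))) := measure_iUnion_le _
      _ ≤ ∑' n : ℕ, ENNReal.ofReal ((c * q^(k-1)) * q^n) := by
          refine ENNReal.tsum_le_tsum fun n => ?_
          have h := hEbound (n + (k-1))
          rwa [pow_add, show c * (q^n * q^(k-1)) = (c * q^(k-1)) * q^n by ring] at h
      _ = ENNReal.ofReal (∑' n : ℕ, (c * q^(k-1)) * q^n) := by
          rw [ENNReal.ofReal_tsum_of_nonneg (fun n => by positivity)
            ((summable_geometric_of_lt_one hq0.le hq1).mul_left _)]
      _ = ENNReal.ofReal (c * q^(k-1) * (1-q)⁻¹) := by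
          rw [tsum_mul_left, tsum_geometric_of_lt_one hq0.le hq1]
  rcases le_or_gt q (1 - 1/(k:ℝ)) with hcase | hcase
  · exact hPg.trans (ENNReal.ofReal_le_ofReal (final_real_1 c q k hk hc0 hq0 hq1 hcase))
  · have hπ16 : π^2 ≤ 16 := by nlinarith [Real.pi_le_four, Real.pi_pos]
    have hc64 : (64:ℝ) ≤ c := by
      rw [hcdef, le_div_iff₀ (by positivity)]
      nlinarith
    calc P {ω | (k : ℝ≥0∞) ≤ ∑' n : ℕ, (E n).indicator (fun _ => (1 : ℝ≥0∞)) ω} ≤ 1 :=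
          prob_le_one
      _ = ENNReal.ofReal 1 := ENNReal.ofReal_one.symm
      _ ≤ _ := ENNReal.ofReal_le_ofReal (final_real_2 c q k hk hc64 hq0 hcase)
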